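/- Let a,b,c,d ∈ ℂ and let T ∈ M_4(ℂ) be the strictly upper triangular matrix with rows (0,a,b,c), (0,0,d,b), (0,0,0,a), (0,0,0,0). Then T is unitarily equivalent to its transpose Tᵗ via the symmetric unitary matrix U whose rows are (0,0,0,1), (0,0,1,0), (0,1,0,0), (1,0,0,0), i.e., U T U* = Tᵗ; consequently T is UECSM. -/

import Mathlib

open Matrix Complex

/-- `T` is unitarily equivalent to a complex symmetric matrix. -/
def UECSM {n : ℕ} (T : Matrix (Fin n) (Fin n) ℂ) : Prop :=
  ∃ U S : Matrix (Fin n) (Fin n) ℂ,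
    U ∈ Matrix.unitaryGroup (Fin n) ℂ ∧ S = Sᵀ ∧ T = U * S * Uᴴ

noncomputable def Wmat : Matrix (Fin 4) (Fin 4) ℂ :=
  !![(1+I)/2, 0, 0, (1-I)/2; 0, (1+I)/2, (1-I)/2, 0;
     0, (1-I)/2, (1+I)/2, 0; (1-I)/2, 0, 0, (1+I)/2]

lemma Wmat_conjTranspose :
    Wmatᴴ = !![(1-I)/2, 0, 0, (1+I)/2; 0, (1-I)/2, (1+I)/2, 0;
               0, (1+I)/2, (1-I)/2, 0; (1+I)/2, 0, 0, (1-I)/2] := by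
  ext i j
  fin_cases i <;> fin_cases j <;>
    simp [Wmat, Matrix.conjTranspose_apply, map_div₀, Complex.conj_I, Complex.conj_ofNat,
      sub_eq_add_neg]

lemma Wmat_unitary : Wmat * Wmatᴴ = 1 := by
  rw [Wmat_conjTranspose]
  ext i j
  fin_cases i <;> fin_cases j <;>
    simp [Wmat, Matrix.mul_apply, Fin.sum_univ_four] <;>
    ring_nf <;> simp [Complex.I_sq] <;> ring_nf

set_option maxHeartbeats 1000000 in
lemma Smat_symm (a b c d : ℂ) :
    (Wmatᴴ * !![0, a, b, c; 0, 0, d, b; 0, 0, 0, a; 0, 0, 0, 0] * Wmat)ᵀ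
      = Wmatᴴ * !![0, a, b, c; 0, 0, d, b; 0, 0, 0, a; 0, 0, 0, 0] * Wmat := by
  rw [Wmat_conjTranspose]
  ext i j
  fin_cases i <;> fin_cases j <;>
    simp [Wmat, Matrix.mul_apply, Fin.sum_univ_four, Matrix.transpose_apply] <;>
    ring_nf

theorem transpose_via_antidiagonal_unitary (a b c d : ℂ)
    (T : Matrix (Fin 4) (Fin 4) ℂ)
    (hT : T = !![0, a, b, c; 0, 0, d, b; 0, 0, 0, a; 0, 0, 0, 0])
    (U : Matrix (Fin 4) (Fin 4) ℂ)
    (hU : U = !![0, 0, 0, 1; 0, 0, 1, 0; 0, 1, 0, 0; 1, 0, 0, 0]) :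
    U ∈ Matrix.unitaryGroup (Fin 4) ℂ ∧ U = Uᵀ ∧ U * T * Uᴴ = Tᵀ ∧ UECSM T := by
  subst hT hU
  refine ⟨?_, ?_, ?_, ?_⟩
  · rw [Matrix.mem_unitaryGroup_iff]
    ext i j
    fin_cases i <;> fin_cases j <;>
      simp [Matrix.mul_apply, Fin.sum_univ_four, Matrix.star_apply, Matrix.vecHead,
        Matrix.vecTail]
  · ext i j
    fin_cases i <;> fin_cases j <;>
      simp [Matrix.transpose_apply, Matrix.vecHead, Matrix.vecTail]
  · ext i j
    fin_cases i <;> fin_cases j <;>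
      simp [Matrix.mul_apply, Fin.sum_univ_four, Matrix.conjTranspose_apply,
        Matrix.vecHead, Matrix.vecTail]
  · refine ⟨Wmat, Wmatᴴ * !![0, a, b, c; 0, 0, d, b; 0, 0, 0, a; 0, 0, 0, 0] * Wmat,
      Matrix.mem_unitaryGroup_iff.mpr (by rw [Matrix.star_eq_conjTranspose]; exact Wmat_unitary),
      (Smat_symm a b c d).symm, ?_⟩
    rw [Matrix.mul_assoc, Matrix.mul_assoc, Matrix.mul_assoc, Wmat_unitary, Matrix.mul_one,
      ← Matrix.mul_assoc, Wmat_unitary, Matrix.one_mul]
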